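/- Identification of the control counterfactual mean in Scenario 3 (Theorem S J.1): under conditions (A1), (C1) and (C2), E[Y⁰ | S = 0] = E[ μ′₀₀(X, W) | S = 0 ] = E[ ((1−A)/π′(X, W)) · Y | S = 0 ]. -/

import Mathlib

open MeasureTheory Filter

/-- `m` is a version of the conditional expectation `E[Z ∣ X; B]`. -/
def IsVersion {Ω E : Type*} [MeasurableSpace Ω] [MeasurableSpace E]
    (P : Measure Ω) (X : Ω → E) (Z : Ω → ℝ) (B : Set Ω) (m : E → ℝ) : Prop :=
  Measurable m ∧
    ∀ h : E → ℝ, Measurable h → (∃ C, ∀ x, |h x| ≤ C) →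
      ∫ ω in B, Z ω * h (X ω) ∂P = ∫ ω in B, m (X ω) * h (X ω) ∂P

/-- Conditional mean `E[Z ∣ B]` of a real random variable given an event `B`. -/
noncomputable def condMean {Ω : Type*} [MeasurableSpace Ω]
    (P : Measure Ω) (Z : Ω → ℝ) (B : Set Ω) : ℝ :=
  (∫ ω in B, Z ω ∂P) / (P B).toReal

lemma min_nat_tendsto (c : ℝ) : Tendsto (fun n : ℕ => min c (n:ℝ)) atTop (nhds c) := by
  apply Tendsto.congr' _ tendsto_const_nhds
  filter_upwards [eventually_ge_atTop ⌈c⌉₊] with n hn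
  exact (min_eq_left ((Nat.le_ceil c).trans (by exact_mod_cast hn))).symm

lemma trunc_tendsto (x : ℝ) : Tendsto (fun n : ℕ => max (min x (n:ℝ)) (-(n:ℝ))) atTop (nhds x) := by
  apply Tendsto.congr' _ tendsto_const_nhds
  filter_upwards [eventually_ge_atTop ⌈|x|⌉₊] with n hn
  have h : |x| ≤ (n:ℝ) := (Nat.le_ceil _).trans (by exact_mod_cast hn)
  rw [min_eq_left ((le_abs_self x).trans h), max_eq_left (by
    have := neg_abs_le x; linarith)]

lemma trunc_abs_le_abs (x : ℝ) (n : ℕ) : |max (min x (n:ℝ)) (-(n:ℝ))| ≤ |x| := by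
  rw [abs_le]
  constructor
  · apply le_max_of_le_left; exact le_min (neg_abs_le x)
      (le_trans (neg_nonpos.2 (abs_nonneg x)) (Nat.cast_nonneg n))
  · exact max_le ((min_le_left _ _).trans (le_abs_self x))
      (le_trans (neg_nonpos.2 (Nat.cast_nonneg n)) (abs_nonneg x))

lemma trunc_abs_le_n (x : ℝ) (n : ℕ) : |max (min x (n:ℝ)) (-(n:ℝ))| ≤ (n:ℝ) := by
  rw [abs_le]
  exact ⟨le_max_right _ _, max_le ((min_le_right _ _))
    (le_trans (neg_nonpos.2 (Nat.cast_nonneg n)) (Nat.cast_nonneg n))⟩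

/-- Extension of the version property to unbounded (but integrable) test functions,
by truncation and dominated convergence. -/
lemma isVersion_integral_eq {Ω G : Type*} [MeasurableSpace Ω] [MeasurableSpace G]
    (P : Measure Ω) (XW : Ω → G) (hXW : Measurable XW) (Z : Ω → ℝ) (hZ : Measurable Z)
    (B : Set Ω) (m : G → ℝ) (hv : IsVersion P XW Z B m) (g : G → ℝ) (hg : Measurable g)
    (h1 : Integrable (fun ω => Z ω * g (XW ω)) (P.restrict B))
    (h2 : Integrable (fun ω => m (XW ω) * g (XW ω)) (P.restrict B)) :
    ∫ ω in B, Z ω * g (XW ω) ∂P = ∫ ω in B, m (XW ω) * g (XW ω) ∂P := by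
  set t : ℕ → ℝ → ℝ := fun n x => max (min x (n:ℝ)) (-(n:ℝ)) with ht
  have htm : ∀ n, Measurable fun p => t n (g p) := fun n =>
    ((hg.min measurable_const).max measurable_const)
  have heq : ∀ n : ℕ, ∫ ω in B, Z ω * t n (g (XW ω)) ∂P
      = ∫ ω in B, m (XW ω) * t n (g (XW ω)) ∂P := fun n =>
    hv.2 (fun p => t n (g p)) (htm n) ⟨(n:ℝ), fun x => trunc_abs_le_n _ n⟩
  have TL : Tendsto (fun n : ℕ => ∫ ω in B, Z ω * t n (g (XW ω)) ∂P) atTop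
      (nhds (∫ ω in B, Z ω * g (XW ω) ∂P)) := by
    apply tendsto_integral_of_dominated_convergence (fun ω => ‖Z ω * g (XW ω)‖)
      (fun n => ((hZ.mul ((htm n).comp hXW)).aestronglyMeasurable)) h1.norm
    · intro n
      refine Filter.Eventually.of_forall fun ω => ?_
      simp only [Pi.mul_apply, Function.comp_apply, norm_mul, Real.norm_eq_abs]
      exact mul_le_mul_of_nonneg_left (trunc_abs_le_abs _ n) (abs_nonneg _)
    · exact Filter.Eventually.of_forall fun ω => (trunc_tendsto (g (XW ω))).const_mul _
  have TR : Tendsto (fun n : ℕ => ∫ ω in B, m (XW ω) * t n (g (XW ω)) ∂P) atTop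
      (nhds (∫ ω in B, m (XW ω) * g (XW ω) ∂P)) := by
    apply tendsto_integral_of_dominated_convergence (fun ω => ‖m (XW ω) * g (XW ω)‖)
      (fun n => (((hv.1.comp hXW).mul ((htm n).comp hXW)).aestronglyMeasurable)) h2.norm
    · intro n
      refine Filter.Eventually.of_forall fun ω => ?_
      simp only [Pi.mul_apply, Function.comp_apply, norm_mul, Real.norm_eq_abs]
      exact mul_le_mul_of_nonneg_left (trunc_abs_le_abs _ n) (abs_nonneg _)
    · exact Filter.Eventually.of_forall fun ω => (trunc_tendsto (g (XW ω))).const_mul _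
  exact tendsto_nhds_unique (TL.congr heq) TR

/-- Theorem S J.1 (Scenario 3): identification of the control counterfactual mean,
under (A1), (C1), (C2):
`E[Y⁰ ∣ S = 0] = E[μ′₀₀(X,W) ∣ S = 0] = E[((1−A)/π′(X,W))·Y ∣ S = 0]`. -/
theorem control_mean_identification_scenario3
    {Ω E F : Type*} [MeasurableSpace Ω] [MeasurableSpace E] [MeasurableSpace F]
    (P : Measure Ω) [IsProbabilityMeasure P]
    (X : Ω → E) (W : Ω → F) (S A Y Y0 Y1 : Ω → ℝ)
    (hX : Measurable X) (hW : Measurable W)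
    (hS : Measurable S) (hA : Measurable A) (hY : Measurable Y)
    (hS01 : ∀ ω, S ω = 0 ∨ S ω = 1) (hA01 : ∀ ω, A ω = 0 ∨ A ω = 1)
    (hPS0 : 0 < P {ω | S ω = 0})
    (hYint : Integrable Y P) (hY0int : Integrable Y0 P) (hY1int : Integrable Y1 P)
    (μ00' π' : E × F → ℝ)
    -- (A1)
    (hA1 : ∀ᵐ ω ∂P, Y ω = A ω * Y1 ω + (1 - A ω) * Y0 ω)
    -- (C1, combined with A1)
    (hPS0A0 : 0 < P {ω | S ω = 0 ∧ A ω = 0})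
    (hμ00'obs : IsVersion P (fun ω => (X ω, W ω)) Y {ω | S ω = 0 ∧ A ω = 0} μ00')
    (hμ00'cf : IsVersion P (fun ω => (X ω, W ω)) Y0 {ω | S ω = 0} μ00')
    -- (C2)
    (hπ' : IsVersion P (fun ω => (X ω, W ω)) (fun ω => 1 - A ω) {ω | S ω = 0} π')
    (hπ'01 : ∀ᵐ ω ∂P, S ω = 0 → 0 < π' (X ω, W ω) ∧ π' (X ω, W ω) < 1)
    -- integrability of the expressions inside the identifying expectations
    (hint1 : Integrable (fun ω => μ00' (X ω, W ω)) P)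
    (hint2 : Integrable (fun ω => (1 - A ω) / π' (X ω, W ω) * Y ω) P) :
    condMean P Y0 {ω | S ω = 0}
      = condMean P (fun ω => μ00' (X ω, W ω)) {ω | S ω = 0} ∧
    condMean P Y0 {ω | S ω = 0}
      = condMean P (fun ω => (1 - A ω) / π' (X ω, W ω) * Y ω) {ω | S ω = 0} := by
  set B : Set Ω := {ω | S ω = 0} with hB_def
  set B0 : Set Ω := {ω | S ω = 0 ∧ A ω = 0} with hB0_def
  have hXW : Measurable fun ω => (X ω, W ω) := hX.prodMk hW
  have hB : MeasurableSet B := hS (measurableSet_singleton 0)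
  have hA0 : MeasurableSet {ω | A ω = 0} := hA (measurableSet_singleton 0)
  have hB0eq : B0 = B ∩ {ω | A ω = 0} := by
    rw [hB0_def, hB_def]; ext ω; simp [Set.mem_inter_iff, Set.mem_setOf_eq]
  have hB0 : MeasurableSet B0 := by rw [hB0eq]; exact hB.inter hA0
  have hB0sub : B0 ⊆ B := fun ω h => h.1
  -- Step 0: E[Y0; B] = E[μ00'(X,W); B]
  have key1 : ∫ ω in B, Y0 ω ∂P = ∫ ω in B, μ00' (X ω, W ω) ∂P := by
    simpa using hμ00'cf.2 (fun _ => 1) measurable_const ⟨1, fun x => by norm_num⟩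
  -- indicator identity: integrating (1-A)·f over B equals integrating f over B0
  have ind : ∀ f : Ω → ℝ,
      ∫ ω in B, (1 - A ω) * f ω ∂P = ∫ ω in B0, f ω ∂P := by
    intro f
    have h1 : ∀ ω, (1 - A ω) * f ω = ({ω | A ω = 0}).indicator f ω := by
      intro ω; rcases hA01 ω with h | h <;> simp [Set.indicator_apply, h]
    calc ∫ ω in B, (1 - A ω) * f ω ∂P
        = ∫ ω in B, ({ω | A ω = 0}).indicator f ω ∂P :=
          integral_congr_ae (Filter.Eventually.of_forall fun ω => h1 ω)
      _ = ∫ ω in B ∩ {ω | A ω = 0}, f ω ∂P := setIntegral_indicator hA0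
      _ = ∫ ω in B0, f ω ∂P := by rw [hB0eq]
  -- the truncated inverse propensity weights
  set hn : ℕ → (E × F) → ℝ := fun n p => min (max ((π' p)⁻¹) 0) (n:ℝ) with hhn_def
  have hhnm : ∀ n, Measurable (hn n) := fun n =>
    (hπ'.1.inv.max measurable_const).min measurable_const
  have hhn_nonneg : ∀ n p, 0 ≤ hn n p := fun n p =>
    le_min (le_max_right _ _) (Nat.cast_nonneg n)
  have hhnb : ∀ n p, |hn n p| ≤ (n:ℝ) := fun n p =>
    abs_le.2 ⟨le_trans (neg_nonpos.2 (Nat.cast_nonneg n)) (hhn_nonneg n p), min_le_right _ _⟩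
  have hhn_le_inv : ∀ n p, 0 < π' p → hn n p ≤ (π' p)⁻¹ := fun n p hp =>
    (min_le_left _ _).trans_eq (max_eq_left (inv_nonneg.2 hp.le))
  have hhn_mul_le_one : ∀ n p, 0 < π' p → π' p * hn n p ≤ 1 := by
    intro n p hp
    have := mul_le_mul_of_nonneg_left (hhn_le_inv n p hp) hp.le
    rwa [mul_inv_cancel₀ hp.ne'] at this
  have hhn_tendsto : ∀ p, 0 < π' p →
      Tendsto (fun n : ℕ => hn n p) atTop (nhds ((π' p)⁻¹)) := by
    intro p hp
    refine (min_nat_tendsto ((π' p)⁻¹)).congr fun n => ?_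
    rw [hhn_def]; simp only []
    rw [max_eq_left (inv_nonneg.2 hp.le)]
  -- a.e. positivity of π' on B and B0
  have haeB : ∀ᵐ ω ∂(P.restrict B), 0 < π' (X ω, W ω) ∧ π' (X ω, W ω) < 1 := by
    filter_upwards [ae_restrict_of_ae hπ'01, ae_restrict_mem hB] with ω h1 h2
    exact h1 h2
  have haeB0 : ∀ᵐ ω ∂(P.restrict B0), 0 < π' (X ω, W ω) ∧ π' (X ω, W ω) < 1 :=
    ae_mono (Measure.restrict_mono hB0sub le_rfl) haeB
  have h1A : ∀ ω, |1 - A ω| ≤ 1 := fun ω => by rcases hA01 ω with h | h <;> simp [h]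
  -- bound used twice
  have bnd : ∀ (n : ℕ) (p : E × F), 0 < π' p →
      ‖π' p * (μ00' p * hn n p)‖ ≤ ‖μ00' p‖ := by
    intro n p hp
    rw [Real.norm_eq_abs, Real.norm_eq_abs, abs_mul, abs_mul,
      abs_of_nonneg hp.le, abs_of_nonneg (hhn_nonneg n p)]
    nlinarith [hhn_mul_le_one n p hp, abs_nonneg (μ00' p), hhn_nonneg n p, hp.le]
  -- E1: obs version with bounded test function hn
  have E1 : ∀ n : ℕ, ∫ ω in B0, Y ω * hn n (X ω, W ω) ∂P
      = ∫ ω in B0, μ00' (X ω, W ω) * hn n (X ω, W ω) ∂P := fun n =>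
    hμ00'obs.2 (hn n) (hhnm n) ⟨(n:ℝ), fun p => hhnb n p⟩
  -- E2: π' version with (unbounded) test function μ00'·hn
  have E2 : ∀ n : ℕ, ∫ ω in B, (1 - A ω) * (μ00' (X ω, W ω) * hn n (X ω, W ω)) ∂P
      = ∫ ω in B, π' (X ω, W ω) * (μ00' (X ω, W ω) * hn n (X ω, W ω)) ∂P := by
    intro n
    refine isVersion_integral_eq P _ hXW _ (measurable_const.sub hA) B π' hπ'
      (fun p => μ00' p * hn n p) (hμ00'cf.1.mul (hhnm n)) ?_ ?_
    · refine Integrable.mono' ((hint1.norm.const_mul (n:ℝ)).restrict)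
        (((measurable_const.sub hA).mul
          ((hμ00'cf.1.mul (hhnm n)).comp hXW)).aestronglyMeasurable)
        (Filter.Eventually.of_forall fun ω => ?_)
      rw [norm_mul, norm_mul, Real.norm_eq_abs, Real.norm_eq_abs, Real.norm_eq_abs]
      calc |1 - A ω| * (|μ00' (X ω, W ω)| * |hn n (X ω, W ω)|)
          ≤ 1 * (|μ00' (X ω, W ω)| * (n:ℝ)) :=
            mul_le_mul (h1A ω)
              (mul_le_mul_of_nonneg_left (hhnb n _) (abs_nonneg _))
              (by positivity) zero_le_one
        _ = (n:ℝ) * |μ00' (X ω, W ω)| := by ring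
    · refine Integrable.mono' (hint1.norm.restrict)
        (((hπ'.1.comp hXW).mul
          ((hμ00'cf.1.mul (hhnm n)).comp hXW)).aestronglyMeasurable) ?_
      filter_upwards [haeB] with ω hω
      exact bnd n _ hω.1
  -- chain E1 → ind → E2
  have E3 : ∀ n : ℕ, ∫ ω in B0, Y ω * hn n (X ω, W ω) ∂P
      = ∫ ω in B, π' (X ω, W ω) * (μ00' (X ω, W ω) * hn n (X ω, W ω)) ∂P := fun n =>
    (E1 n).trans
      (((ind (fun ω => μ00' (X ω, W ω) * hn n (X ω, W ω))).symm).trans (E2 n))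
  -- integrability of Y/π' on B0
  have hint2' : Integrable (fun ω => Y ω * (π' (X ω, W ω))⁻¹) (P.restrict B0) := by
    refine (hint2.restrict (s := B0)).congr ?_
    filter_upwards [ae_restrict_mem hB0] with ω hω
    have hA0ω : A ω = 0 := hω.2
    rw [hA0ω, div_eq_mul_inv]; ring
  -- T1: LHS of E3 converges to ∫_{B0} Y/π'
  have T1 : Tendsto (fun n : ℕ => ∫ ω in B0, Y ω * hn n (X ω, W ω) ∂P) atTop
      (nhds (∫ ω in B0, Y ω * (π' (X ω, W ω))⁻¹ ∂P)) := by
    apply tendsto_integral_of_dominated_convergence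
      (fun ω => ‖Y ω * (π' (X ω, W ω))⁻¹‖)
      (fun n => (hY.mul ((hhnm n).comp hXW)).aestronglyMeasurable) hint2'.norm
    · intro n
      filter_upwards [haeB0] with ω hω
      show ‖Y ω * hn n (X ω, W ω)‖ ≤ ‖Y ω * (π' (X ω, W ω))⁻¹‖
      rw [norm_mul, norm_mul, Real.norm_eq_abs, Real.norm_eq_abs, Real.norm_eq_abs,
        abs_of_nonneg (hhn_nonneg n _), abs_of_nonneg (inv_nonneg.2 hω.1.le)]
      exact mul_le_mul_of_nonneg_left (hhn_le_inv n _ hω.1) (abs_nonneg _)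
    · filter_upwards [haeB0] with ω hω
      exact (hhn_tendsto _ hω.1).const_mul (Y ω)
  -- T2: RHS of E3 converges to ∫_B μ00'
  have T2 : Tendsto (fun n : ℕ =>
        ∫ ω in B, π' (X ω, W ω) * (μ00' (X ω, W ω) * hn n (X ω, W ω)) ∂P) atTop
      (nhds (∫ ω in B, μ00' (X ω, W ω) ∂P)) := by
    apply tendsto_integral_of_dominated_convergence (fun ω => ‖μ00' (X ω, W ω)‖)
      (fun n => ((hπ'.1.comp hXW).mul
        ((hμ00'cf.1.mul (hhnm n)).comp hXW)).aestronglyMeasurable)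
      (hint1.norm.restrict)
    · intro n
      filter_upwards [haeB] with ω hω
      exact bnd n _ hω.1
    · filter_upwards [haeB] with ω hω
      have t := ((hhn_tendsto _ hω.1).const_mul (μ00' (X ω, W ω))).const_mul
        (π' (X ω, W ω))
      rwa [show π' (X ω, W ω) * (μ00' (X ω, W ω) * (π' (X ω, W ω))⁻¹)
          = μ00' (X ω, W ω) by
            rw [mul_comm (μ00' (X ω, W ω)) _, ← mul_assoc,
              mul_inv_cancel₀ hω.1.ne', one_mul]] at t
  have key2top : ∫ ω in B0, Y ω * (π' (X ω, W ω))⁻¹ ∂P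
      = ∫ ω in B, μ00' (X ω, W ω) ∂P :=
    tendsto_nhds_unique (T1.congr E3) T2
  have key2 : ∫ ω in B, (1 - A ω) / π' (X ω, W ω) * Y ω ∂P
      = ∫ ω in B, μ00' (X ω, W ω) ∂P := by
    calc ∫ ω in B, (1 - A ω) / π' (X ω, W ω) * Y ω ∂P
        = ∫ ω in B, (1 - A ω) * (Y ω * (π' (X ω, W ω))⁻¹) ∂P :=
          integral_congr_ae (Filter.Eventually.of_forall fun ω => by
            show (1 - A ω) / π' (X ω, W ω) * Y ω
              = (1 - A ω) * (Y ω * (π' (X ω, W ω))⁻¹)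
            rw [div_eq_mul_inv]; ring)
      _ = ∫ ω in B0, Y ω * (π' (X ω, W ω))⁻¹ ∂P := ind _
      _ = ∫ ω in B, μ00' (X ω, W ω) ∂P := key2top
  constructor
  · unfold condMean; rw [key1]
  · unfold condMean; rw [key1, ← key2]
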